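/- For every natural number N there exists a natural number K such that for every k ≥ K and every finite tree T with at most 2^{k−1} vertices and Γ(T) = k, one has Γ(T) − z(T) ≥ N. In particular, since the minimal tree t-atom T_k has exactly 2^{k−1} vertices and Γ(T_k) = k, it follows that Γ(T_k) − z(T_k) → ∞ as k → ∞. -/

import Mathlib

/-- A proper vertex coloring of `G` using exactly the colors `{1, …, k}`:
every vertex gets a color in `{1, …, k}`, adjacent vertices get different
colors, and every color in `{1, …, k}` is used. -/
def IsProperColoring {V : Type*} (G : SimpleGraph V) (k : ℕ) (c : V → ℕ) : Prop :=
  (∀ v, c v ∈ Finset.Icc 1 k) ∧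
  (∀ u v, G.Adj u v → c u ≠ c v) ∧
  (∀ i ∈ Finset.Icc 1 k, ∃ v, c v = i)

/-- A Grundy coloring of `G` using `k` colors: a proper coloring using `k` colors
such that every vertex of color `j` has, for each color `i < j`, a neighbor of color `i`. -/
def IsGrundyColoring {V : Type*} (G : SimpleGraph V) (k : ℕ) (c : V → ℕ) : Prop :=
  IsProperColoring G k c ∧
  ∀ v, ∀ i ∈ Finset.Icc 1 k, i < c v → ∃ w, G.Adj v w ∧ c w = i

/-- In a coloring `c` of `G` with colors `{1, …, k}`, a vertex `v` is color-dominating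
if for every color `j ∈ {1, …, k}` different from the color of `v`, the vertex `v`
has a neighbor of color `j`. -/
def IsCDVertex {V : Type*} (G : SimpleGraph V) (k : ℕ) (c : V → ℕ) (v : V) : Prop :=
  ∀ j ∈ Finset.Icc 1 k, j ≠ c v → ∃ w, G.Adj v w ∧ c w = j

/-- A color-dominating coloring (b-coloring) of `G` using `k` colors: a proper coloring
using `k` colors in which every color class contains a color-dominating vertex. -/
def IsBColoring {V : Type*} (G : SimpleGraph V) (k : ℕ) (c : V → ℕ) : Prop :=
  IsProperColoring G k c ∧
  ∀ i ∈ Finset.Icc 1 k, ∃ v, c v = i ∧ IsCDVertex G k c v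

/-- A z-coloring of `G` using `k` colors: a proper coloring which is simultaneously
a Grundy coloring and a color-dominating coloring, and which admits color-dominating
vertices `u 1, …, u k` with `c (u j) = j` such that `u k` is adjacent to each `u j`, `j ≠ k`. -/
def IsZColoring {V : Type*} (G : SimpleGraph V) (k : ℕ) (c : V → ℕ) : Prop :=
  IsGrundyColoring G k c ∧ IsBColoring G k c ∧
  ∃ u : ℕ → V,
    (∀ j ∈ Finset.Icc 1 k, c (u j) = j ∧ IsCDVertex G k c (u j)) ∧
    (∀ j ∈ Finset.Icc 1 k, j ≠ k → G.Adj (u k) (u j))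

/-- The Grundy number of `G`: the maximum `k` such that `G` admits a Grundy coloring
using `k` colors. -/
noncomputable def grundyNumber {V : Type*} (G : SimpleGraph V) : ℕ :=
  sSup {k | ∃ c : V → ℕ, IsGrundyColoring G k c}

/-- The b-chromatic number of `G`: the maximum `k` such that `G` admits a b-coloring
using `k` colors. -/
noncomputable def bNumber {V : Type*} (G : SimpleGraph V) : ℕ :=
  sSup {k | ∃ c : V → ℕ, IsBColoring G k c}

/-- The z-chromatic number of `G`: the maximum `k` such that `G` admits a z-coloring
using `k` colors. -/
noncomputable def zNumber {V : Type*} (G : SimpleGraph V) : ℕ :=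
  sSup {k | ∃ c : V → ℕ, IsZColoring G k c}

open SimpleGraph Finset
set_option linter.unusedSectionVars false

namespace S19

variable {V : Type} [DecidableEq V]

def Wit (c : V → ℕ) (h : V → ℕ → V) : ℕ → V → Finset V
  | 0, v => {v}
  | (n+1), v => insert v ((Finset.Icc 1 (c v - 1)).biUnion fun i => Wit c h n (h v i))

variable {G : SimpleGraph V} {c : V → ℕ} {h : V → ℕ → V}

lemma mem_wit_succ {n : ℕ} {v y : V} :
    y ∈ Wit c h (n+1) v ↔ y = v ∨ ∃ i, 1 ≤ i ∧ i < c v ∧ y ∈ Wit c h n (h v i) := by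
  simp only [Wit, Finset.mem_insert, Finset.mem_biUnion, Finset.mem_Icc]
  apply or_congr_right
  constructor
  · rintro ⟨i, ⟨h1, h2⟩, h3⟩; exact ⟨i, h1, by omega, h3⟩
  · rintro ⟨i, h1, h2, h3⟩; exact ⟨i, ⟨h1, by omega⟩, h3⟩

section hyps
variable (hh : ∀ v i, 1 ≤ i → i < c v → G.Adj v (h v i) ∧ c (h v i) = i)
  (hT : G.IsTree)

include hh

lemma wit_col_le : ∀ n (v x : V), x ∈ Wit c h n v → c x ≤ c v := by
  intro n
  induction n with
  | zero => intro v x hx; simp only [Wit, Finset.mem_singleton] at hx; subst hx; exact le_rfl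
  | succ n ih =>
    intro v x hx
    rw [mem_wit_succ] at hx
    rcases hx with rfl | ⟨i, h1, h2, h3⟩
    · exact le_rfl
    · have := ih _ _ h3
      rw [(hh v i h1 h2).2] at this
      omega

lemma wit_walk : ∀ n (v x : V), x ∈ Wit c h n v →
    ∃ p : G.Walk v x, List.Chain' (· > ·) (p.support.map c) ∧ ∀ y ∈ p.support, y ∈ Wit c h n v := by
  intro n
  induction n with
  | zero =>
    intro v x hx
    simp only [Wit, Finset.mem_singleton] at hx
    subst hx
    exact ⟨Walk.nil, List.isChain_singleton _, by simp [Wit]⟩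
  | succ n ih =>
    intro v x hx
    rw [mem_wit_succ] at hx
    rcases hx with rfl | ⟨i, h1, h2, h3⟩
    · exact ⟨Walk.nil, List.isChain_singleton _, by simp [mem_wit_succ]⟩
    · obtain ⟨q, hq1, hq2⟩ := ih _ _ h3
      refine ⟨Walk.cons (hh v i h1 h2).1 q, ?_, ?_⟩
      · rw [Walk.support_cons, List.map_cons]
        rw [q.support_eq_cons, List.map_cons] at hq1 ⊢
        refine List.isChain_cons_cons.mpr ⟨?_, hq1⟩
        rw [(hh v i h1 h2).2]; exact h2
      · intro y hy
        rw [Walk.support_cons, List.mem_cons] at hy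
        rcases hy with rfl | hy
        · exact mem_wit_succ.mpr (Or.inl rfl)
        · exact mem_wit_succ.mpr (Or.inr ⟨i, h1, h2, hq2 y hy⟩)

omit hh in
lemma chain_path {u x : V} {p : G.Walk u x} (hc : List.Chain' (· > ·) (p.support.map c)) :
    p.IsPath := by
  rw [Walk.isPath_def]
  have hp : (p.support.map c).Pairwise (· > ·) := List.isChain_iff_pairwise.mp hc
  exact List.Nodup.of_map c (hp.imp fun hab => ne_of_gt hab)

omit hh in
lemma chain_cons {v w x : V} (hadj : G.Adj v w) (q : G.Walk w x) (hlt : c w < c v)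
    (hch : List.Chain' (· > ·) (q.support.map c)) :
    List.Chain' (· > ·) ((Walk.cons hadj q).support.map c) := by
  rw [Walk.support_cons, List.map_cons]
  rw [q.support_eq_cons, List.map_cons] at hch ⊢
  exact List.isChain_cons_cons.mpr ⟨hlt, hch⟩

include hT

/-- a neighbor of `v` inside the `i`-th branch must be `h v i` itself -/
lemma adj_root {n : ℕ} {v w : V} {i : ℕ} (h1 : 1 ≤ i) (h2 : i < c v)
    (hw : w ∈ Wit c h n (h v i)) (hadj : G.Adj v w) : w = h v i := by
  obtain ⟨q, hch, -⟩ := wit_walk hh n (h v i) w hw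
  have hlt : c (h v i) < c v := by rw [(hh v i h1 h2).2]; exact h2
  have hp1 : (Walk.cons (hh v i h1 h2).1 q).IsPath := chain_path (chain_cons _ q hlt hch)
  have hp2 : (Walk.cons hadj (Walk.nil : G.Walk w w)).IsPath := by
    rw [Walk.isPath_def, Walk.support_cons, Walk.support_nil]
    simp [hadj.ne]
  have heq := (hT.existsUnique_path v w).unique hp1 hp2
  have hsup := congrArg Walk.support heq
  rw [Walk.support_cons, Walk.support_cons, Walk.support_nil, q.support_eq_cons] at hsup
  simp only [List.cons.injEq] at hsup
  exact hsup.2.1.symm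

/-- distinct branches are disjoint -/
lemma branch_disj {n : ℕ} {v x : V} {i j : ℕ} (h1 : 1 ≤ i) (hij : i < j) (h2 : j < c v)
    (hxi : x ∈ Wit c h n (h v i)) (hxj : x ∈ Wit c h n (h v j)) : False := by
  have h1j : 1 ≤ j := by omega
  have hiv : i < c v := by omega
  obtain ⟨qi, hchi, -⟩ := wit_walk hh n (h v i) x hxi
  obtain ⟨qj, hchj, -⟩ := wit_walk hh n (h v j) x hxj
  have hlti : c (h v i) < c v := by rw [(hh v i h1 hiv).2]; omega
  have hltj : c (h v j) < c v := by rw [(hh v j h1j h2).2]; exact h2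
  have hp1 : (Walk.cons (hh v i h1 hiv).1 qi).IsPath := chain_path (chain_cons _ qi hlti hchi)
  have hp2 : (Walk.cons (hh v j h1j h2).1 qj).IsPath := chain_path (chain_cons _ qj hltj hchj)
  have heq := (hT.existsUnique_path v x).unique hp1 hp2
  have hsup := congrArg Walk.support heq
  rw [Walk.support_cons, Walk.support_cons, qi.support_eq_cons, qj.support_eq_cons] at hsup
  simp only [List.cons.injEq] at hsup
  have : c (h v i) = c (h v j) := by rw [hsup.2.1]
  rw [(hh v i h1 hiv).2, (hh v j h1j h2).2] at this
  omega

/-- no edges between distinct branches -/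
lemma no_cross_core {n : ℕ} {v x w : V} {i j : ℕ} (h1 : 1 ≤ i) (hij : i < j) (h2 : j < c v)
    (hx : x ∈ Wit c h n (h v i)) (hw : w ∈ Wit c h n (h v j)) (hadj : G.Adj x w) : False := by
  have h1j : 1 ≤ j := by omega
  have hiv : i < c v := by omega
  obtain ⟨qi, hchi, hsupi⟩ := wit_walk hh n (h v i) x hx
  obtain ⟨qj, hchj, -⟩ := wit_walk hh n (h v j) w hw
  have hlti : c (h v i) < c v := by rw [(hh v i h1 hiv).2]; omega
  have hltj : c (h v j) < c v := by rw [(hh v j h1j h2).2]; exact h2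
  set p1 : G.Walk v x := Walk.cons (hh v i h1 hiv).1 qi with hp1def
  have hch1 : List.Chain' (· > ·) (p1.support.map c) := chain_cons _ qi hlti hchi
  have hp1 : p1.IsPath := chain_path hch1
  have hwp1 : w ∉ p1.support := by
    rw [hp1def, Walk.support_cons, List.mem_cons]
    rintro (heq | hmem)
    · have := wit_col_le hh n (h v j) w hw
      rw [(hh v j h1j h2).2] at this
      rw [heq] at this
      omega
    · exact branch_disj hh hT h1 hij h2 (hsupi w hmem) hw
  have hp1' : (p1.concat hadj).IsPath := by
    rw [Walk.isPath_def, Walk.support_concat, List.nodup_append]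
    refine ⟨hp1.support_nodup, List.nodup_singleton w, ?_⟩
    intro a ha b hb
    rw [List.mem_singleton] at hb
    subst hb
    rintro rfl
    exact hwp1 ha
  have hp2 : (Walk.cons (hh v j h1j h2).1 qj).IsPath := chain_path (chain_cons _ qj hltj hchj)
  have heq := (hT.existsUnique_path v w).unique hp1' hp2
  have hsup := congrArg Walk.support heq
  rw [Walk.support_concat, hp1def, Walk.support_cons,
    qi.support_eq_cons, Walk.support_cons, qj.support_eq_cons, List.cons_append,
    List.cons_append] at hsup
  simp only [List.cons.injEq] at hsup
  have : c (h v i) = c (h v j) := by rw [hsup.2.1]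
  rw [(hh v i h1 hiv).2, (hh v j h1j h2).2] at this
  omega

lemma no_cross {n : ℕ} {v x w : V} {i j : ℕ} (h1 : 1 ≤ i) (h1j : 1 ≤ j) (hiv : i < c v)
    (hjv : j < c v) (hij : i ≠ j)
    (hx : x ∈ Wit c h n (h v i)) (hw : w ∈ Wit c h n (h v j)) (hadj : G.Adj x w) : False := by
  rcases lt_or_gt_of_ne hij with hlt | hgt
  · exact no_cross_core hh hT h1 hlt hjv hx hw hadj
  · exact no_cross_core hh hT h1j hgt hiv hw hx hadj.symm

lemma wit_key : ∀ n (v : V), c v ≤ n + 1 → ∀ x ∈ Wit c h n v, ∀ w w', G.Adj x w → G.Adj x w' →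
    w ∈ Wit c h n v → w' ∈ Wit c h n v →
    ((c w < c x → c w' < c x → c w = c w' → w = w') ∧ (c x < c w → c x < c w' → w = w')) := by
  intro n
  induction n with
  | zero =>
    intro v hv x hx w w' haw haw' hw hw'
    simp only [Wit, Finset.mem_singleton] at hx hw
    subst hx; subst hw
    exact absurd rfl haw.ne
  | succ n ih =>
    intro v hv x hx w w' haw haw' hw hw'
    rw [mem_wit_succ] at hx hw hw'
    rcases hx with rfl | ⟨i, hi1, hi2, hxi⟩
    · -- x = v
      rcases hw with heq | ⟨a, ha1, ha2, hwa⟩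
      · exact absurd heq.symm haw.ne
      rcases hw' with heq | ⟨b, hb1, hb2, hwb⟩
      · exact absurd heq.symm haw'.ne
      have hwa' : w = h x a := adj_root hh hT ha1 ha2 hwa haw
      have hwb' : w' = h x b := adj_root hh hT hb1 hb2 hwb haw'
      constructor
      · intro _ _ hcc
        have hca : c w = a := by rw [hwa', (hh x a ha1 ha2).2]
        have hcb : c w' = b := by rw [hwb', (hh x b hb1 hb2).2]
        have : a = b := by omega
        rw [hwa', hwb', this]
      · intro hlt _
        exfalso
        have : c w = a := by rw [hwa', (hh x a ha1 ha2).2]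
        omega
    · -- x ∈ branch i
      have hside : c (h v i) ≤ n + 1 := by rw [(hh v i hi1 hi2).2]; omega
      -- classify a neighbor
      have classify : ∀ y, G.Adj x y →
          (y = v ∨ ∃ a, 1 ≤ a ∧ a < c v ∧ y ∈ Wit c h n (h v a)) →
          ((y = v ∧ x = h v i) ∨ y ∈ Wit c h n (h v i)) := by
        intro y hay hy
        rcases hy with rfl | ⟨a, ha1, ha2, hya⟩
        · exact Or.inl ⟨rfl, adj_root hh hT hi1 hi2 hxi hay.symm⟩
        · rcases eq_or_ne a i with rfl | hne
          · exact Or.inr hya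
          · exact absurd (no_cross hh hT hi1 ha1 hi2 ha2 (Ne.symm hne) hxi hya hay) not_false
      have Hw := classify w haw hw
      have Hw' := classify w' haw' hw'
      have hcx : c x ≤ i := by
        have := wit_col_le hh n (h v i) x hxi
        rwa [(hh v i hi1 hi2).2] at this
      constructor
      · intro hlw hlw' hcc
        rcases Hw with ⟨hwv, hxeq⟩ | hwb
        · exfalso
          have h1 : c x = i := by rw [hxeq, (hh v i hi1 hi2).2]
          have h2 : c w = c v := by rw [hwv]
          omega
        rcases Hw' with ⟨hwv, hxeq⟩ | hwb'
        · exfalso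
          have h1 : c x = i := by rw [hxeq, (hh v i hi1 hi2).2]
          have h2 : c w' = c v := by rw [hwv]
          omega
        exact (ih (h v i) hside x hxi w w' haw haw' hwb hwb').1 hlw hlw' hcc
      · intro hgw hgw'
        rcases Hw with ⟨hwv, hxeq⟩ | hwb
        · rcases Hw' with ⟨hwv', _⟩ | hwb'
          · rw [hwv, hwv']
          · exfalso
            have h1 : c x = i := by rw [hxeq, (hh v i hi1 hi2).2]
            have h2 : c w' ≤ i := by
              have := wit_col_le hh n (h v i) w' hwb'
              rwa [(hh v i hi1 hi2).2] at this
            omega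
        · rcases Hw' with ⟨hwv, hxeq⟩ | hwb'
          · exfalso
            have h1 : c x = i := by rw [hxeq, (hh v i hi1 hi2).2]
            have h2 : c w ≤ i := by
              have := wit_col_le hh n (h v i) w hwb
              rwa [(hh v i hi1 hi2).2] at this
            omega
          · exact (ih (h v i) hside x hxi w w' haw haw' hwb hwb').2 hgw hgw'

omit hT in
omit hh in
lemma sum_pow (m : ℕ) : ∑ i ∈ Finset.Icc 1 m, 2^(i-1) = 2^m - 1 := by
  induction m with
  | zero => simp
  | succ n ihn =>
    rw [Finset.sum_Icc_succ_top (by omega : 1 ≤ n + 1), ihn]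
    have h1 : 1 ≤ 2^n := Nat.one_le_two_pow
    have h2 : 2^(n+1) = 2^n + 2^n := by rw [pow_succ]; ring
    simp only [Nat.add_sub_cancel]
    omega

lemma wit_card : ∀ n (v : V), c v ≤ n + 1 → 2^(c v - 1) ≤ (Wit c h n v).card := by
  intro n
  induction n with
  | zero =>
    intro v hv
    have : c v - 1 = 0 := by omega
    rw [this]
    simp [Wit]
  | succ n ih =>
    intro v hv
    have hmemlt : ∀ i ∈ Finset.Icc 1 (c v - 1), 1 ≤ i ∧ i < c v := by
      intro i hi; rw [Finset.mem_Icc] at hi; omega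
    have hdisj : ∀ i ∈ Finset.Icc 1 (c v - 1), ∀ j ∈ Finset.Icc 1 (c v - 1), i ≠ j →
        Disjoint (Wit c h n (h v i)) (Wit c h n (h v j)) := by
      intro i hi j hj hij
      rw [Finset.disjoint_left]
      intro x hxi hxj
      rcases lt_or_gt_of_ne hij with hlt | hgt
      · exact absurd (branch_disj hh hT (hmemlt i hi).1 hlt (hmemlt j hj).2 hxi hxj) not_false
      · exact absurd (branch_disj hh hT (hmemlt j hj).1 hgt (hmemlt i hi).2 hxj hxi) not_false
    have hvnot : v ∉ (Finset.Icc 1 (c v - 1)).biUnion fun i => Wit c h n (h v i) := by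
      rw [Finset.mem_biUnion]
      rintro ⟨i, hi, hmem⟩
      have := wit_col_le hh n (h v i) v hmem
      rw [(hh v i (hmemlt i hi).1 (hmemlt i hi).2).2] at this
      have := (hmemlt i hi).2
      omega
    have hrw : Wit c h (n+1) v = insert v ((Finset.Icc 1 (c v - 1)).biUnion fun i => Wit c h n (h v i)) := rfl
    rw [hrw, Finset.card_insert_of_notMem hvnot, Finset.card_biUnion hdisj]
    have hsum : ∑ i ∈ Finset.Icc 1 (c v - 1), 2^(i-1) ≤
        ∑ i ∈ Finset.Icc 1 (c v - 1), (Wit c h n (h v i)).card := by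
      refine Finset.sum_le_sum ?_
      intro i hi
      have hcol := (hh v i (hmemlt i hi).1 (hmemlt i hi).2).2
      have := ih (h v i) (by rw [hcol]; rw [Finset.mem_Icc] at hi; omega)
      rwa [hcol] at this
    rw [sum_pow] at hsum
    have hpos : 1 ≤ 2^(c v - 1) := Nat.one_le_two_pow
    omega
end hyps

lemma proper_le_card {V : Type} [Fintype V] {G : SimpleGraph V} {k : ℕ} {c : V → ℕ}
    (hp : IsProperColoring G k c) : k ≤ Fintype.card V := by
  classical
  rcases Nat.eq_zero_or_pos k with rfl | hk
  · exact Nat.zero_le _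
  obtain ⟨-, -, h3⟩ := hp
  obtain ⟨v0, -⟩ := h3 1 (Finset.mem_Icc.mpr ⟨le_rfl, hk⟩)
  have h3' : ∀ i, ∃ v : V, i ∈ Finset.Icc 1 k → c v = i := fun i => by
    by_cases hi : i ∈ Finset.Icc 1 k
    · obtain ⟨v, hv⟩ := h3 i hi; exact ⟨v, fun _ => hv⟩
    · exact ⟨v0, fun hmem => absurd hmem hi⟩
  choose f hf using h3'
  have hinj : Set.InjOn f (Finset.Icc 1 k) := by
    intro a ha b hb hab
    rw [Finset.coe_Icc, Set.mem_Icc] at ha hb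
    have ha' := hf a (Finset.mem_Icc.mpr ha)
    have hb' := hf b (Finset.mem_Icc.mpr hb)
    rw [← ha', ← hb', hab]
  have := Finset.card_le_card_of_injOn f (fun a _ => Finset.mem_univ _) hinj
  simp only [Nat.card_Icc, Finset.card_univ] at this
  omega

end S19

/-- For every `N` there is `K` such that every finite tree `T` with at
most `2^(k-1)` vertices and `Γ(T) = k ≥ K` satisfies `Γ(T) - z(T) ≥ N` (stated as
`z(T) + N ≤ Γ(T)`). In particular `Γ(T_k) - z(T_k) → ∞` for the minimal tree
`t`-atoms `T_k`, which have exactly `2^(k-1)` vertices and Grundy number `k`. -/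
theorem statement_19 (N : ℕ) :
    ∃ K : ℕ, ∀ k : ℕ, K ≤ k →
      ∀ (V : Type) (_ : Fintype V) (G : SimpleGraph V), G.IsTree →
        Fintype.card V ≤ 2 ^ (k - 1) → grundyNumber G = k →
        zNumber G + N ≤ grundyNumber G := by
  classical
  refine ⟨2 * N + 4, ?_⟩
  intro k hk V _inst G hT hcard hG
  have hk4 : 4 ≤ k := by omega
  -- extract a Grundy coloring with k colors
  have hbdd : BddAbove {k' | ∃ c : V → ℕ, IsGrundyColoring G k' c} := by
    refine ⟨Fintype.card V, ?_⟩
    rintro k' ⟨c, hc⟩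
    exact S19.proper_le_card hc.1
  have hne : {k' | ∃ c : V → ℕ, IsGrundyColoring G k' c}.Nonempty := by
    by_contra hcon
    rw [Set.not_nonempty_iff_eq_empty] at hcon
    rw [grundyNumber, hcon, csSup_empty] at hG
    simp at hG
    omega
  have hmem : k ∈ {k' | ∃ c : V → ℕ, IsGrundyColoring G k' c} := by
    rw [← hG, grundyNumber]
    exact Nat.sSup_mem hne hbdd
  obtain ⟨c, ⟨hc1, hc2, hc3⟩, hc4⟩ := hmem
  have hcol : ∀ v, 1 ≤ c v ∧ c v ≤ k := fun v => Finset.mem_Icc.mp (hc1 v)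
  -- choose witnesses of smaller colors
  have hwit' : ∀ (v : V) (i : ℕ), ∃ w, 1 ≤ i → i < c v → G.Adj v w ∧ c w = i := by
    intro v i
    by_cases hvi : 1 ≤ i ∧ i < c v
    · obtain ⟨w, hw⟩ := hc4 v i
        (Finset.mem_Icc.mpr ⟨hvi.1, le_trans (le_of_lt hvi.2) (hcol v).2⟩) hvi.2
      exact ⟨w, fun _ _ => hw⟩
    · exact ⟨v, fun h1 h2 => absurd ⟨h1, h2⟩ hvi⟩
  choose h hh using hwit'
  -- the root
  obtain ⟨r, hr⟩ := hc3 k (Finset.mem_Icc.mpr ⟨by omega, le_rfl⟩)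
  -- the witness set is everything
  have hSuniv : S19.Wit c h k r = Finset.univ := by
    apply Finset.eq_univ_of_card
    have h1 : 2 ^ (k - 1) ≤ (S19.Wit c h k r).card := by
      have := S19.wit_card hh hT k r (by rw [hr]; omega)
      rwa [hr] at this
    have h2 : (S19.Wit c h k r).card ≤ Fintype.card V := Finset.card_le_univ _
    omega
  have hmemS : ∀ x : V, x ∈ S19.Wit c h k r := fun x => hSuniv ▸ Finset.mem_univ x
  have MSL : ∀ x w w' : V, G.Adj x w → G.Adj x w' →
      ((c w < c x → c w' < c x → c w = c w' → w = w') ∧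
        (c x < c w → c x < c w' → w = w')) := by
    intro x w w' haw haw'
    exact S19.wit_key hh hT k r (by rw [hr]; omega) x (hmemS x) w w' haw haw' (hmemS w) (hmemS w')
  -- neighborhoods
  let Nb : V → Finset V := fun x => Finset.univ.filter (fun w => G.Adj x w)
  have hmemNb : ∀ x w, w ∈ Nb x ↔ G.Adj x w := by
    intro x w; simp [Nb]
  -- the split of neighborhoods
  have hsplit : ∀ x, Nb x ⊆ (Nb x).filter (fun w => c x < c w) ∪ (Nb x).filter (fun w => c w < c x) := by
    intro x w hw
    have hadj : G.Adj x w := (hmemNb x w).mp hw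
    have hne : c x ≠ c w := hc2 x w hadj
    rcases lt_or_gt_of_ne hne with hlt | hgt
    · exact Finset.mem_union.mpr (Or.inl (Finset.mem_filter.mpr ⟨hw, hlt⟩))
    · exact Finset.mem_union.mpr (Or.inr (Finset.mem_filter.mpr ⟨hw, hgt⟩))
  have hhigh : ∀ x, ((Nb x).filter (fun w => c x < c w)).card ≤ 1 := by
    intro x
    rw [Finset.card_le_one]
    intro a ha b hb
    rw [Finset.mem_filter] at ha hb
    exact (MSL x a b ((hmemNb x a).mp ha.1) ((hmemNb x b).mp hb.1)).2 ha.2 hb.2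
  have hlowinj : ∀ x (d : ℕ),
      ((Nb x).filter (fun w => c w < c x ∧ d ≤ c w)).card ≤ (Finset.Icc d (c x - 1)).card := by
    intro x d
    refine Finset.card_le_card_of_injOn c ?_ ?_
    · intro w hw
      rw [Finset.mem_coe, Finset.mem_filter] at hw
      rw [Finset.mem_coe, Finset.mem_Icc]
      exact ⟨hw.2.2, by omega⟩
    · intro a ha b hb hab
      rw [Finset.coe_filter, Set.mem_setOf_eq] at ha hb
      exact (MSL x a b ((hmemNb x a).mp ha.1) ((hmemNb x b).mp hb.1)).1 ha.2.1 hb.2.1 hab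
  -- degree bound
  have deg_le : ∀ x, (Nb x).card ≤ c x := by
    intro x
    have h1 := Finset.card_le_card (hsplit x)
    have h2 := Finset.card_union_le ((Nb x).filter (fun w => c x < c w))
      ((Nb x).filter (fun w => c w < c x))
    have h3 : ((Nb x).filter (fun w => c w < c x)).card ≤ (Finset.Icc 1 (c x - 1)).card := by
      have heq : (Nb x).filter (fun w => c w < c x) =
          (Nb x).filter (fun w => c w < c x ∧ 1 ≤ c w) := by
        apply Finset.filter_congr
        intro w _
        simp only [iff_self_and]
        intro _
        exact (hcol w).1
      rw [heq]
      exact hlowinj x 1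
    rw [Nat.card_Icc] at h3
    have h4 := hhigh x
    have := (hcol x).1
    omega
  -- counting neighbors of large degree
  have count_le : ∀ x (d : ℕ), 1 ≤ d →
      ((Nb x).filter (fun w => d ≤ (Nb w).card)).card ≤ k - d + 1 := by
    intro x d hd
    have hsub : (Nb x).filter (fun w => d ≤ (Nb w).card) ⊆
        (Nb x).filter (fun w => c x < c w) ∪ (Nb x).filter (fun w => c w < c x ∧ d ≤ c w) := by
      intro w hw
      rw [Finset.mem_filter] at hw
      have hadj : G.Adj x w := (hmemNb x w).mp hw.1
      have hne : c x ≠ c w := hc2 x w hadj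
      have hdc : d ≤ c w := le_trans hw.2 (deg_le w)
      rcases lt_or_gt_of_ne hne with hlt | hgt
      · exact Finset.mem_union.mpr (Or.inl (Finset.mem_filter.mpr ⟨hw.1, hlt⟩))
      · exact Finset.mem_union.mpr (Or.inr (Finset.mem_filter.mpr ⟨hw.1, hgt, hdc⟩))
    have h1 := Finset.card_le_card hsub
    have h2 := Finset.card_union_le ((Nb x).filter (fun w => c x < c w))
      ((Nb x).filter (fun w => c w < c x ∧ d ≤ c w))
    have h3 := hlowinj x d
    have h4 := hhigh x
    rw [Nat.card_Icc] at h3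
    have hcx := (hcol x).2
    omega
  -- bound on z-colorings
  have hz : ∀ m : ℕ, (∃ c' : V → ℕ, IsZColoring G m c') → 2 * m ≤ k + 4 := by
    rintro m ⟨c', hzg, hzb, u, hu1, hu2⟩
    rcases Nat.lt_or_ge m 2 with hm | hm
    · omega
    have humem : m ∈ Finset.Icc 1 m := Finset.mem_Icc.mpr ⟨by omega, le_rfl⟩
    -- every u j has degree at least m - 1
    have hdeg : ∀ j ∈ Finset.Icc 1 m, m - 1 ≤ (Nb (u j)).card := by
      intro j hj
      obtain ⟨hcj, hcd⟩ := hu1 j hj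
      have hch : ∀ l : ℕ, ∃ w, l ∈ (Finset.Icc 1 m).erase j → G.Adj (u j) w ∧ c' w = l := by
        intro l
        by_cases hl : l ∈ (Finset.Icc 1 m).erase j
        · rw [Finset.mem_erase] at hl
          obtain ⟨w, hw⟩ := hcd l hl.2 (by rw [hcj]; exact hl.1)
          exact ⟨w, fun _ => hw⟩
        · exact ⟨u j, fun hmem => absurd hmem hl⟩
      choose f hf using hch
      have hinj : Set.InjOn f ((Finset.Icc 1 m).erase j) := by
        intro a ha b hb hab
        rw [Finset.mem_coe] at ha hb
        have ha' := (hf a ha).2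
        have hb' := (hf b hb).2
        rw [← ha', ← hb', hab]
      have hcards := Finset.card_le_card_of_injOn f
        (fun l hl => (hmemNb (u j) (f l)).mpr (hf l hl).1) hinj
      rw [Finset.card_erase_of_mem hj, Nat.card_Icc] at hcards
      omega
    -- the u j, j ≠ m, land in the large-degree neighbors of u m
    set A := (Nb (u m)).filter (fun w => m - 1 ≤ (Nb w).card) with hA
    have hsubA : ∀ j ∈ (Finset.Icc 1 m).erase m, u j ∈ A := by
      intro j hj
      rw [Finset.mem_erase] at hj
      rw [hA, Finset.mem_filter]
      refine ⟨(hmemNb (u m) (u j)).mpr (hu2 j hj.2 hj.1), hdeg j hj.2⟩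
    have hinjA : Set.InjOn u ((Finset.Icc 1 m).erase m) := by
      intro a ha b hb hab
      rw [Finset.mem_coe, Finset.mem_erase] at ha hb
      have ha' := (hu1 a ha.2).1
      have hb' := (hu1 b hb.2).1
      rw [← ha', ← hb', hab]
    have hlow : m - 1 ≤ A.card := by
      have := Finset.card_le_card_of_injOn u hsubA hinjA
      rw [Finset.card_erase_of_mem humem, Nat.card_Icc] at this
      omega
    have hupp : A.card ≤ k - (m - 1) + 1 := count_le (u m) (m - 1) (by omega)
    omega
  -- conclude
  rw [hG]
  have hzle : zNumber G ≤ (k + 4) / 2 := by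
    rw [zNumber]
    refine csSup_le' ?_
    rintro m hm
    have := hz m hm
    omega
  omega
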